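/- Fix real μ ∈ [0,1) and ν. The geometric-Bernoulli weights gB(α,β;k), defined by gB(α,β;0) = β and gB(α,β;k) = (1−β)(1−α)α^{k−1} for k ≥ 1, with the four second parameters β ∈ {(1−μ)/(1−ν), (1−μ)/(1−μν), (1−μ)/((1−ν)(1−μν)), (1−μ)(1+ν)/(1−μν)}, all lie in [0,1] (and hence define probability distributions on ℤ_{≥0} when combined with α = μ) if and only if either (−1 ≤ ν ≤ 0 and 0 ≤ μ < 1) or (0 < ν < 1 and ν/(1−ν+ν²) ≤ μ < 1). -/
import Mathlib


open Filter Topology MeasureTheory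

/-- Finite q-Pochhammer symbol `(a;q)_n`. -/
noncomputable def qPoch (a q : ℝ) (n : ℕ) : ℝ := ∏ i ∈ Finset.range n, (1 - a * q ^ i)

/-- Infinite q-Pochhammer symbol `(a;q)_∞`. -/
noncomputable def qPochInf (a q : ℝ) : ℝ := ∏' i : ℕ, (1 - a * q ^ i)

/-- The q-beta-binomial weight `φ_{q,μ,ν}(s|y)`. -/
noncomputable def phiW (q μ ν : ℝ) (s y : ℕ) : ℝ :=
  μ ^ s * (qPoch (ν / μ) q s * qPoch μ q (y - s) / qPoch ν q y) *
    (qPoch q q y / (qPoch q q s * qPoch q q (y - s)))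

/-- The weight `φ_{q,μ,ν}(s|∞)`. -/
noncomputable def phiInfW (q μ ν : ℝ) (s : ℕ) : ℝ :=
  μ ^ s * (qPoch (ν / μ) q s / qPoch q q s) * (qPochInf μ q / qPochInf ν q)

/-- The q-hypergeometric weight `ψ_{q,a,b,c}(p)`. -/
noncomputable def psiW (q a b c : ℝ) (p : ℕ) : ℝ :=
  (c / (a * b)) ^ p * (qPoch a q p * qPoch b q p / (qPoch q q p * qPoch c q p)) *
    (qPochInf c q * qPochInf (c / (a * b)) q / (qPochInf (c / a) q * qPochInf (c / b) q))

/-- The q-Hahn PushTASEP update probability `P_{ℓ,g}(L)`. -/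
noncomputable def Phahn (q μ ν : ℝ) (ℓ g L : ℕ) : ℝ :=
  ∑ p ∈ Finset.range (min ℓ L + 1),
    phiW q⁻¹ (q ^ g) (μ * ν * q ^ ((g : ℤ) - 1)) p ℓ *
      psiW q (ν * μ⁻¹ * q ^ p) (ν * q ^ g) (ν ^ 2 * q ^ (g + p)) (L - p)

/-- The geometric-Bernoulli weight. -/
noncomputable def gB (alpha beta : ℝ) (k : ℕ) : ℝ :=
  if k = 0 then beta else (1 - beta) * (1 - alpha) * alpha ^ (k - 1)

/-- The four geometric-Bernoulli second parameters arising at q = 0 all lie in [0,1]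
iff the stated parameter conditions hold. -/
theorem stmt_11 (mu nu : ℝ) (hmu0 : 0 ≤ mu) (hmu1 : mu < 1) :
    ((0 ≤ (1 - mu) / (1 - nu) ∧ (1 - mu) / (1 - nu) ≤ 1)
      ∧ (0 ≤ (1 - mu) / (1 - mu * nu) ∧ (1 - mu) / (1 - mu * nu) ≤ 1)
      ∧ (0 ≤ (1 - mu) / ((1 - nu) * (1 - mu * nu))
          ∧ (1 - mu) / ((1 - nu) * (1 - mu * nu)) ≤ 1)
      ∧ (0 ≤ (1 - mu) * (1 + nu) / (1 - mu * nu)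
          ∧ (1 - mu) * (1 + nu) / (1 - mu * nu) ≤ 1))
    ↔ ((-1 ≤ nu ∧ nu ≤ 0) ∨ (0 < nu ∧ nu < 1 ∧ nu / (1 - nu + nu ^ 2) ≤ mu)) := by
  have hp : (0:ℝ) < 1 - mu := by linarith
  constructor
  · rintro ⟨⟨hA0, hA1⟩, ⟨hB0, hB1⟩, ⟨hC0, hC1⟩, ⟨hD0, hD1⟩⟩
    by_cases hν : nu ≤ 0
    · left
      refine ⟨?_, hν⟩
      have hd : (0:ℝ) < 1 - mu * nu := by nlinarith
      rcases div_nonneg_iff.mp hD0 with ⟨h1, _⟩ | ⟨_, h2⟩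
      · nlinarith
      · nlinarith
    · push_neg at hν
      right
      have hν1 : nu < 1 := by
        by_contra h
        push_neg at h
        rcases eq_or_lt_of_le h with h1 | h1
        · have e : (1 - mu) * (1 + nu) / (1 - mu * nu) = 2 := by
            rw [← h1, mul_one, div_eq_iff (by linarith : (1:ℝ) - mu ≠ 0)]
            ring
          rw [e] at hD1
          linarith
        · have hd : 1 - nu < 0 := by linarith
          rcases div_nonneg_iff.mp hA0 with ⟨_, h2⟩ | ⟨h2, _⟩
          · linarith
          · linarith
      have hdn : (0:ℝ) < 1 - mu * nu := by nlinarith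
      have hd1 : (0:ℝ) < 1 - nu := by linarith
      have hd : (0:ℝ) < (1 - nu) * (1 - mu * nu) := mul_pos hd1 hdn
      have hC := (div_le_one hd).mp hC1
      have hq : (0:ℝ) < 1 - nu + nu ^ 2 := by nlinarith
      exact ⟨hν, hν1, (div_le_iff₀ hq).mpr (by nlinarith)⟩
  · rintro (⟨h1, h2⟩ | ⟨h1, h2, h3⟩)
    · have hd1 : (0:ℝ) < 1 - nu := by linarith
      have hdn : (0:ℝ) < 1 - mu * nu := by nlinarith
      have hd : (0:ℝ) < (1 - nu) * (1 - mu * nu) := mul_pos hd1 hdn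
      refine ⟨⟨div_nonneg hp.le hd1.le, (div_le_one hd1).mpr ?_⟩,
        ⟨div_nonneg hp.le hdn.le, (div_le_one hdn).mpr ?_⟩,
        ⟨div_nonneg hp.le hd.le, (div_le_one hd).mpr ?_⟩,
        ⟨div_nonneg (mul_nonneg hp.le (by linarith)) hdn.le,
          (div_le_one hdn).mpr ?_⟩⟩ <;> nlinarith
    · have hq : (0:ℝ) < 1 - nu + nu ^ 2 := by nlinarith
      have hm : nu ≤ mu * (1 - nu + nu ^ 2) := by
        have := (div_le_iff₀ hq).mp h3
        linarith
      have hnm : nu ≤ mu := by nlinarith [mul_nonneg (mul_nonneg hmu0 h1.le) (by linarith : (0:ℝ) ≤ 1 - nu)]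
      have hd1 : (0:ℝ) < 1 - nu := by linarith
      have hdn : (0:ℝ) < 1 - mu * nu := by nlinarith
      have hd : (0:ℝ) < (1 - nu) * (1 - mu * nu) := mul_pos hd1 hdn
      refine ⟨⟨div_nonneg hp.le hd1.le, (div_le_one hd1).mpr ?_⟩,
        ⟨div_nonneg hp.le hdn.le, (div_le_one hdn).mpr ?_⟩,
        ⟨div_nonneg hp.le hd.le, (div_le_one hd).mpr ?_⟩,
        ⟨div_nonneg (mul_nonneg hp.le (by linarith)) hdn.le,
          (div_le_one hdn).mpr ?_⟩⟩ <;> nlinarith
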